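/- arXiv:1803.06786 — 2 statements merged into one kernel-verified Lean document; each statement's English description precedes it below -/
import Mathlib

section
/- For any real numbers x, y with 0 ≤ x ≤ 1 and 0 ≤ y ≤ 1, and any natural number n ≥ 1, we have (1 - x·y)^n ≤ 1 - x + exp(-y·n). -/
theorem stmt_0 (x y : ℝ) (hx0 : 0 ≤ x) (hx1 : x ≤ 1) (hy0 : 0 ≤ y) (hy1 : y ≤ 1)
    (n : ℕ) (hn : 1 ≤ n) :
    (1 - x * y) ^ n ≤ 1 - x + Real.exp (-(y * n)) := by
  have hconv := (convexOn_pow n).2 (Set.mem_Ici.mpr zero_le_one)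
    (Set.mem_Ici.mpr (by linarith : (0:ℝ) ≤ 1 - y))
    (by linarith : (0:ℝ) ≤ 1 - x) hx0 (by ring)
  have h1 : (1 - x * y) ^ n ≤ (1 - x) * 1 ^ n + x * (1 - y) ^ n := by
    have e : (1:ℝ) - x + x * (1 - y) = 1 - x * y := by ring
    simpa [smul_eq_mul, e] using hconv
  have h2 : x * (1 - y) ^ n ≤ (1 - y) ^ n := by
    nlinarith [pow_nonneg (by linarith : (0:ℝ) ≤ 1 - y) n]
  have h3 : (1 - y) ^ n ≤ Real.exp (-(y * n)) := by
    have hb : 1 - y ≤ Real.exp (-y) := by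
      linarith [Real.add_one_le_exp (-y)]
    calc (1 - y) ^ n ≤ Real.exp (-y) ^ n :=
          pow_le_pow_left₀ (by linarith) hb n
      _ = Real.exp (-(y * n)) := by
          rw [← Real.exp_nat_mul]; ring_nf
  calc (1 - x * y) ^ n ≤ (1 - x) * 1 ^ n + x * (1 - y) ^ n := h1
    _ ≤ 1 - x + Real.exp (-(y * n)) := by have := h2.trans h3; simp; linarith
end

section
/- Let V be a random variable on a finite alphabet 𝒱 with distribution P_V having entropy H(V) > 0, and let 0 < α < β < 1. Then there exists a positive integer L and a subset A ⊆ 𝒱^L such that the product measure satisfies α < P_V^{⊗L}(A) ≤ β. -/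
open MeasureTheory

/-- Shannon entropy (in nats) of a probability measure on a finite alphabet. -/
noncomputable def shannonEntropy {V : Type*} [Fintype V] [MeasurableSpace V]
    (P : Measure V) : ℝ :=
  -∑ v : V, (P {v}).toReal * Real.log (P {v}).toReal

lemma atom_lt_one {V : Type*} [Fintype V] [MeasurableSpace V] [MeasurableSingletonClass V]
    (P : Measure V) [IsProbabilityMeasure P] (hH : 0 < shannonEntropy P) (v : V) :
    (P {v}).toReal < 1 := by
  by_contra h
  push_neg at h
  have hle : (P {v}).toReal ≤ 1 := by
    have := prob_le_one (μ := P) (s := {v})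
    exact ENNReal.toReal_le_of_le_ofReal one_pos.le (by simpa using this)
  have heq : (P {v}).toReal = 1 := le_antisymm hle h
  have hP1 : P {v} = 1 := by
    have := ENNReal.ofReal_toReal (a := P {v}) (measure_ne_top P _)
    rw [heq] at this; simpa using this.symm
  have hw : ∀ w, w ≠ v → P {w} = 0 := by
    intro w hw
    have hsub : ({w} : Set V) ⊆ {v}ᶜ := by simp [hw, Ne.symm hw]
    have : P ({v}ᶜ) = 0 := by
      have := measure_compl (measurableSet_singleton v) (measure_ne_top P _)
      rw [hP1, measure_univ] at this; simpa using this
    exact le_antisymm (le_trans (measure_mono hsub) this.le) zero_le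
  have : shannonEntropy P = 0 := by
    unfold shannonEntropy
    rw [Finset.sum_eq_zero]
    · simp
    intro w _
    by_cases hwv : w = v
    · subst hwv; rw [hP1]; simp
    · rw [hw w hwv]; simp
  linarith [hH, this]

theorem stmt_4 {V : Type*} [Fintype V] [MeasurableSpace V] [MeasurableSingletonClass V]
    (P : Measure V) [IsProbabilityMeasure P] (hH : 0 < shannonEntropy P)
    (α β : ℝ) (hα : 0 < α) (hαβ : α < β) (hβ : β < 1) :
    ∃ L : ℕ, 0 < L ∧ ∃ A : Set (Fin L → V), MeasurableSet A ∧
      α < ((Measure.pi fun _ : Fin L => P) A).toReal ∧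
      ((Measure.pi fun _ : Fin L => P) A).toReal ≤ β := by
  classical
  have hne : Nonempty V := by
    by_contra h
    rw [not_nonempty_iff] at h
    have := measure_univ (μ := P)
    rw [Set.univ_eq_empty_iff.mpr h] at this
    simp at this
  inhabit V
  -- max atom probability
  obtain ⟨vm, -, hvm⟩ := Finset.exists_max_image Finset.univ (fun v => (P {v}).toReal)
    ⟨default, Finset.mem_univ _⟩
  set M : ℝ := (P {vm}).toReal with hM
  have hM1 : M < 1 := atom_lt_one P hH vm
  have hM0 : 0 ≤ M := ENNReal.toReal_nonneg
  obtain ⟨L, hL⟩ := exists_pow_lt_of_lt_one (x := β - α) (by linarith) hM1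
  have hLpos : 0 < L := by
    rcases Nat.eq_zero_or_pos L with h | h
    · subst h; simp at hL; linarith
    · exact h
  refine ⟨L, hLpos, ?_⟩
  set μ := (Measure.pi fun _ : Fin L => P) with hμ
  have hμprob : IsProbabilityMeasure μ := by infer_instance
  -- measure of a finset as a sum
  have hsum : ∀ s : Finset (Fin L → V), μ ↑s = ∑ x ∈ s, μ {x} := by
    intro s
    rw [← measure_biUnion_finset]
    · congr 1; ext x; simp
    · intro x _ y _ hxy; simp [Function.onFun, hxy]
    · intro b _; exact measurableSet_singleton b
  have hsingle : ∀ x : Fin L → V, (μ {x}).toReal ≤ M ^ L := by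
    intro x
    have : μ {x} = ∏ i : Fin L, P {x i} := by
      rw [← Set.univ_pi_singleton, Measure.pi_pi]
    rw [this, ENNReal.toReal_prod]
    calc ∏ i : Fin L, (P {x i}).toReal ≤ ∏ _i : Fin L, M :=
          Finset.prod_le_prod (fun i _ => ENNReal.toReal_nonneg)
            (fun i _ => hvm (x i) (Finset.mem_univ _))
      _ = M ^ L := by simp
  -- the real-valued set function
  set f : Finset (Fin L → V) → ℝ := fun s => (μ ↑s).toReal with hf
  have hfsum : ∀ s, f s = ∑ x ∈ s, (μ {x}).toReal := by
    intro s; rw [hf]; simp only; rw [hsum s, ENNReal.toReal_sum]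
    intro x _; exact measure_ne_top μ _
  -- exists finset with f s > α (namely univ)
  have huniv : α < f Finset.univ := by
    have : (↑(Finset.univ : Finset (Fin L → V)) : Set (Fin L → V)) = Set.univ := by simp
    rw [hf]; simp only [this, measure_univ]; simpa using lt_trans hαβ hβ
  -- minimal cardinality
  set T : Set ℕ := {n | ∃ s : Finset (Fin L → V), s.card = n ∧ α < f s} with hT
  have hTne : T.Nonempty := ⟨_, Finset.univ, rfl, huniv⟩
  obtain ⟨s, hscard, hsα⟩ : ∃ s : Finset (Fin L → V), s.card = sInf T ∧ α < f s :=
    Nat.sInf_mem hTne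
  have hsne : s.Nonempty := by
    rcases Finset.eq_empty_or_nonempty s with h | h
    · exfalso; subst h; rw [hfsum] at hsα; simp at hsα; linarith
    · exact h
  obtain ⟨x, hx⟩ := hsne
  have herase : f (s.erase x) ≤ α := by
    by_contra h
    push_neg at h
    have hmem : (s.erase x).card ∈ T := ⟨s.erase x, rfl, h⟩
    have := Nat.sInf_le hmem
    rw [← hscard] at this
    have := Finset.card_erase_lt_of_mem hx
    omega
  have hsplit : f s = f (s.erase x) + (μ {x}).toReal := by
    rw [hfsum, hfsum, Finset.sum_erase_add s _ hx]
  refine ⟨↑s, s.measurableSet, hsα, ?_⟩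
  have := hsingle x
  rw [hf] at hsplit
  simp only at hsplit
  rw [hsplit]
  linarith
end
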